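/- Let R be a CG-ring of odd characteristic, and let K ≤ R^×. Denote by r_p the degree of the residue field of R_p over its prime field, and by U_p the group of principal units 1 + rad(R_p) of R_p. Then K is pure if and only if for every prime p dividing the characteristic of R with R_p not a field, the rank of the abelian p-group K ∩ U_p is strictly less than r_p. -/

import Mathlib

open Pointwise

/-- A Galois ring: a finite commutative local ring whose radical is `pR` for a prime `p`. -/
def IsGaloisRing (R : Type*) [CommRing R] : Prop :=
  ∃ p : ℕ, p.Prime ∧ IsLocalRing R ∧ nilradical R = Ideal.span {(p : R)}

/-- A CG-ring: a finite commutative ring isomorphic to a product of Galois rings of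
pairwise coprime characteristics. -/
def IsCGRing (R : Type*) [CommRing R] : Prop :=
  ∃ (n : ℕ) (S : Fin n → Type) (instR : ∀ i, CommRing (S i)) (_ : ∀ i, Fintype (S i)),
    letI : ∀ i, CommRing (S i) := instR
    (∀ i, IsGaloisRing (S i)) ∧
    (∀ i j, i ≠ j → Nat.Coprime (ringChar (S i)) (ringChar (S j))) ∧
    Nonempty (R ≃+* ∀ i, S i)

/-- A nonempty subset `X` of a ring is pure if `X + I = X` forces `I = 0`. -/
def IsPureSet {R : Type*} [CommRing R] (X : Set R) : Prop :=
  ∀ I : Ideal R, X + (I : Set R) = X → I = ⊥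

set_option linter.unusedSectionVars false
set_option linter.unusedVariables false
set_option maxHeartbeats 1000000
open IsLocalRing

section Component
variable {S : Type} [CommRing S] [Fintype S] [IsLocalRing S] {p : ℕ}

lemma comp_mem_max (hm : maximalIdeal S = Ideal.span {(p:S)}) :
    (p:S) ∈ maximalIdeal S := by
  rw [hm]; exact Ideal.mem_span_singleton_self _

lemma comp_pow_zero (hm : maximalIdeal S = Ideal.span {(p:S)}) : ∃ k, (p:S)^k = 0 := by
  have hpm := comp_mem_max hm
  obtain ⟨a, b, hab, h⟩ := Finite.exists_ne_map_eq_of_infinite (fun n : ℕ => (p:S)^n)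
  wlog hlt : a < b generalizing a b
  · exact this b a hab.symm h.symm (by omega)
  have h1 : (p:S)^a * (1 - (p:S)^(b-a)) = 0 := by
    have : (p:S)^a * (p:S)^(b-a) = (p:S)^b := by
      rw [← pow_add]; congr 1; omega
    rw [mul_sub, mul_one, this, h, sub_self]
  have hu : IsUnit (1 - (p:S)^(b-a)) := by
    apply IsLocalRing.isUnit_one_sub_self_of_mem_nonunits
    have : (p:S)^(b-a) ∈ maximalIdeal S := by
      have : b - a = (b - a - 1) + 1 := by omega
      rw [this, pow_succ]
      exact Ideal.mul_mem_left _ _ hpm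
    exact this
  exact ⟨a, by rwa [IsUnit.mul_left_eq_zero hu] at h1⟩

lemma comp_unit_of_not_mem (x : S) (hx : x ∉ maximalIdeal S) : IsUnit x := by
  by_contra h
  exact hx ((IsLocalRing.mem_maximalIdeal x).2 h)

lemma comp_chain (hm : maximalIdeal S = Ideal.span {(p:S)})
    {n : ℕ} (hn : (p:S)^n = 0) (hn' : ∀ k < n, (p:S)^k ≠ 0) :
    ∀ x : S, x ≠ 0 → ∃ k < n, ∃ u : S, IsUnit u ∧ x = (p:S)^k * u := by
  intro x hx
  classical
  set P : ℕ → Prop := fun k => (p:S)^k ∣ x with hP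
  have hP0 : P 0 := by simp [hP]
  set k := Nat.findGreatest P n with hk
  have hPk : P k := Nat.findGreatest_spec (Nat.zero_le n) hP0
  obtain ⟨y, hy⟩ := hPk
  have hkn : k < n := by
    rcases Nat.lt_or_ge k n with h | h
    · exact h
    · exfalso
      apply hx
      have : (p:S)^k = 0 := by
        have : (p:S)^k = (p:S)^n * (p:S)^(k-n) := by rw [← pow_add]; congr 1; omega
        rw [this, hn, zero_mul]
      rw [hy, this, zero_mul]
  have hyu : IsUnit y := by
    apply comp_unit_of_not_mem
    intro hym
    rw [hm, Ideal.mem_span_singleton] at hym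
    obtain ⟨z, hz⟩ := hym
    have : P (k+1) := ⟨z, by rw [hy, hz, pow_succ]; ring⟩
    exact Nat.findGreatest_is_greatest (P := P) (n := n) (k := k+1) (by omega) (by omega) this
  exact ⟨k, hkn, y, hyu, hy⟩

/-- Main component bundle. -/
lemma comp_main (hp : p.Prime) (hp2 : p ≠ 2)
    (hm : maximalIdeal S = Ideal.span {(p:S)}) :
    ∃ e : S, e ≠ 0 ∧
      (¬ IsField S → e ∈ maximalIdeal S ∧ e * e = 0) ∧
      (∀ x : S, x ≠ 0 → e ∈ Ideal.span {x}) ∧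
      (∀ w : S, w ∈ maximalIdeal S → (1+w)^p = 1 → w ∈ Ideal.span {e}) ∧
      ∃ G : (Fin (Nat.log p (Nat.card (ResidueField S))) → ZMod p) →+ S,
        Function.Injective G ∧ (∀ v, G v ∈ Ideal.span {e}) ∧
        (∀ c ∈ Ideal.span {e}, ∃ v, G v = c) := by
  classical
  haveI : NeZero p := ⟨hp.ne_zero⟩
  haveI := Fact.mk hp
  have hex := comp_pow_zero hm
  set n := Nat.find hex with hndef
  have hn : (p:S)^n = 0 := Nat.find_spec hex
  have hn' : ∀ k < n, (p:S)^k ≠ 0 := fun k hk => Nat.find_min hex hk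
  have hn1 : 1 ≤ n := by
    by_contra h
    have h0 : n = 0 := by omega
    rw [h0, pow_zero] at hn
    exact one_ne_zero hn
  set e := (p:S)^(n-1) with hedef
  have he0 : e ≠ 0 := hn' _ (by omega)
  have hpe : (p:S) * e = 0 := by
    rw [hedef, ← pow_succ']
    have : n - 1 + 1 = n := by omega
    rw [this, hn]
  -- annihilator of p is span {e}
  have hann : ∀ w : S, (p:S) * w = 0 → w ∈ Ideal.span {e} := by
    intro w hw
    by_cases hw0 : w = 0
    · simp [hw0]
    obtain ⟨k, hkn, u, hu, hwe⟩ := comp_chain hm hn hn' w hw0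
    have hk1 : (p:S)^(k+1) * u = 0 := by
      rw [pow_succ']; rw [hwe] at hw; linear_combination hw
    have hpk1 : (p:S)^(k+1) = 0 := by
      rwa [IsUnit.mul_left_eq_zero hu] at hk1
    have : n ≤ k + 1 := by
      by_contra h
      exact hn' (k+1) (by omega) hpk1
    have hkeq : k = n - 1 := by omega
    rw [Ideal.mem_span_singleton, hwe, hkeq]
    exact Dvd.intro _ rfl
  -- minimality
  have hmin : ∀ x : S, x ≠ 0 → e ∈ Ideal.span {x} := by
    intro x hx
    obtain ⟨k, hkn, u, hu, hxe⟩ := comp_chain hm hn hn' x hx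
    rw [Ideal.mem_span_singleton]
    refine ⟨↑hu.unit⁻¹ * (p:S)^(n-1-k), ?_⟩
    rw [hxe, hedef]
    have h1 : (p:S)^k * (p:S)^(n-1-k) = (p:S)^(n-1) := by
      rw [← pow_add]; congr 1; omega
    have h2 : (u:S) * ↑hu.unit⁻¹ = 1 := IsUnit.mul_val_inv hu
    symm
    calc (p:S)^k * u * (↑hu.unit⁻¹ * (p:S)^(n-1-k))
        = ((u:S) * ↑hu.unit⁻¹) * ((p:S)^k * (p:S)^(n-1-k)) := by ring
      _ = (p:S)^(n-1) := by rw [h2, one_mul, h1]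
  -- not a field consequences
  have hnf : ¬ IsField S → e ∈ maximalIdeal S ∧ e * e = 0 := by
    intro hf
    have hmne : maximalIdeal S ≠ ⊥ := by
      intro h
      exact hf (IsLocalRing.isField_iff_maximalIdeal_eq.2 h)
    have hpne : (p:S) ≠ 0 := by
      intro h
      apply hmne
      rw [hm, h, Ideal.span_singleton_eq_bot.2 rfl]
    have hn2 : 2 ≤ n := by
      by_contra h
      have h1 : n = 1 := by omega
      apply hpne
      have h2 := hn
      rw [h1, pow_one] at h2
      exact h2
    constructor
    · rw [hedef]
      have : n - 1 = (n-2) + 1 := by omega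
      rw [this, pow_succ]
      exact Ideal.mul_mem_left _ _ (comp_mem_max hm)
    · rw [hedef, ← pow_add]
      have : (p:S)^(n-1+(n-1)) = (p:S)^n * (p:S)^(n-2) := by
        rw [← pow_add]; congr 1; omega
      rw [this, hn, zero_mul]
  -- torsion
  have htor : ∀ w : S, w ∈ maximalIdeal S → (1+w)^p = 1 → w ∈ Ideal.span {e} := by
    intro w hwm hwp
    have hp3 : 3 ≤ p := by
      have := hp.two_le; omega
    obtain ⟨s, hs⟩ := Ideal.mem_span_singleton.1 (hm ▸ hwm)
    have hexp : (1+w)^p = ∑ k ∈ Finset.range (p+1), w^k * (p.choose k : S) := by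
      rw [add_comm, add_pow]
      simp
    have h1 : (∑ k ∈ Finset.range p, w^(k+1) * (p.choose (k+1) : S)) = 0 := by
      have := hexp.symm.trans hwp
      rw [Finset.sum_range_succ'] at this
      simpa using this
    set c := ∑ k ∈ Finset.range (p-1), w^k * (p.choose (k+2) : S) with hc
    set F : ℕ → S := fun k => w^k * (p.choose k : S) with hF
    have h1' : (∑ k ∈ Finset.range p, F (k+1)) = 0 := h1
    rw [show p = (p-1) + 1 from by omega, Finset.sum_range_succ'] at h1'
    have hF1 : F (0+1) = w * (p:S) := by
      simp [hF, Nat.choose_one_right]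
    have hFs : (∑ k ∈ Finset.range (p-1), F (k+1+1)) = w * (w * c) := by
      rw [hc, Finset.mul_sum, Finset.mul_sum]
      apply Finset.sum_congr rfl
      intro k hk
      simp only [hF]
      ring
    rw [hF1, hFs] at h1'
    have hcm : c ∈ maximalIdeal S := by
      rw [hc]
      apply Ideal.sum_mem
      intro k hk
      rcases k with _ | k'
      · -- term C(p,2)
        have hdvd : p ∣ p.choose 2 := hp.dvd_choose_self (by omega) (by omega)
        obtain ⟨m', hm'⟩ := hdvd
        simp only [pow_zero, one_mul]
        rw [show ((0:ℕ)+2) = 2 from rfl, hm']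
        push_cast
        exact Ideal.mul_mem_right _ _ (comp_mem_max hm)
      · rw [pow_succ']
        exact Ideal.mul_mem_right _ _ (Ideal.mul_mem_right _ _ hwm)
    have h2 : w * (p:S) * (1 + s * c) = 0 := by
      linear_combination h1' - w * c * hs
    have hu : IsUnit (1 + s * c) := by
      have : IsUnit (1 - (-(s * c))) := by
        apply IsLocalRing.isUnit_one_sub_self_of_mem_nonunits
        exact neg_mem (Ideal.mul_mem_left _ _ hcm)
      rwa [sub_neg_eq_add] at this
    have hwp0 : (p:S) * w = 0 := by
      have := (IsUnit.mul_left_eq_zero hu).1 h2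
      linear_combination this
    exact hann w hwp0
  refine ⟨e, he0, hnf, hmin, htor, ?_⟩
  -- residue field side
  have hpm := comp_mem_max hm
  haveI : Finite (ResidueField S) := Quotient.finite _
  haveI : CharP (ResidueField S) p := by
    rw [CharP.charP_iff_prime_eq_zero hp]
    rw [← map_natCast (residue S) p]
    exact Ideal.Quotient.eq_zero_iff_mem.2 hpm
  letI : Algebra (ZMod p) (ResidueField S) := ZMod.algebra _ p
  haveI : Module.Finite (ZMod p) (ResidueField S) := Module.Finite.of_finite
  haveI : Fintype (ResidueField S) := Fintype.ofFinite _
  have hcard : Nat.card (ResidueField S)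
      = p ^ (Module.finrank (ZMod p) (ResidueField S)) := by
    rw [Nat.card_eq_fintype_card, Module.card_eq_pow_finrank (K := ZMod p), ZMod.card]
  have hlog : Nat.log p (Nat.card (ResidueField S))
      = Module.finrank (ZMod p) (ResidueField S) := by
    rw [hcard, Nat.log_pow hp.one_lt]
  -- linear map from residue field into S with range span{e}
  have hker : maximalIdeal S ≤ LinearMap.ker (LinearMap.toSpanSingleton S S e) := by
    rw [hm, Ideal.span_le]
    intro x hx
    simp only [Set.mem_singleton_iff] at hx
    subst hx
    simp only [SetLike.mem_coe, LinearMap.mem_ker, LinearMap.toSpanSingleton_apply]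
    rw [smul_eq_mul]; exact hpe
  set g : ResidueField S →ₗ[S] S :=
    Submodule.liftQ (maximalIdeal S) (LinearMap.toSpanSingleton S S e) hker with hgdef
  have hg_apply : ∀ x : S, g (residue S x) = x * e := by
    intro x
    have : g (residue S x) = (LinearMap.toSpanSingleton S S e) x :=
      Submodule.liftQ_apply _ _ x
    rw [this, LinearMap.toSpanSingleton_apply, smul_eq_mul]
  have hg_inj : Function.Injective g := by
    rw [← LinearMap.ker_eq_bot]
    apply Submodule.ker_liftQ_eq_bot
    intro x hx
    simp only [LinearMap.mem_ker, LinearMap.toSpanSingleton_apply, smul_eq_mul] at hx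
    by_contra hxm
    have hxu := comp_unit_of_not_mem x hxm
    exact he0 ((IsUnit.mul_right_eq_zero hxu).1 hx)
  set B := Module.finBasis (ZMod p) (ResidueField S) with hB
  set E := (B.reindex (finCongr hlog.symm)).equivFun with hE
  refine ⟨g.toAddMonoidHom.comp (E.symm.toLinearMap.toAddMonoidHom), ?_, ?_, ?_⟩
  · exact hg_inj.comp E.symm.injective
  · intro v
    obtain ⟨x, hx⟩ := residue_surjective (R := S) (E.symm v)
    simp only [AddMonoidHom.comp_apply, LinearMap.toAddMonoidHom_coe,
      LinearEquiv.coe_coe]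
    rw [← hx, hg_apply]
    exact Ideal.mem_span_singleton.2 (dvd_mul_left e x)
  · intro cc hcc
    obtain ⟨x, hx⟩ := Ideal.mem_span_singleton.1 hcc
    refine ⟨E (residue S x), ?_⟩
    simp only [AddMonoidHom.comp_apply, LinearMap.toAddMonoidHom_coe,
      LinearEquiv.coe_coe, LinearEquiv.symm_apply_apply]
    rw [hg_apply, hx]; ring

end Component

section Component2
variable {S : Type} [CommRing S] [Fintype S] [IsLocalRing S] {p : ℕ}

lemma comp_p_ne_two (hp : p.Prime) (hm : maximalIdeal S = Ideal.span {(p:S)})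
    (hodd : Odd (ringChar S)) : p ≠ 2 := by
  have hdvd : p ∣ ringChar S := by
    by_contra h
    have hco : Nat.Coprime p (ringChar S) := (hp.coprime_iff_not_dvd).2 h
    haveI : CharP S (ringChar S) := ringChar.charP S
    letI : Algebra (ZMod (ringChar S)) S := ZMod.algebra S (ringChar S)
    have hu : IsUnit ((p : ZMod (ringChar S))) := by
      rw [← ZMod.coe_unitOfCoprime p hco]
      exact Units.isUnit _
    have hu2 : IsUnit ((p:S)) := by
      have := hu.map (algebraMap (ZMod (ringChar S)) S)
      rwa [map_natCast] at this
    exact (IsLocalRing.maximalIdeal.isMaximal S).ne_top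
      (Ideal.eq_top_of_isUnit_mem _ (comp_mem_max hm) hu2)
  intro h2
  obtain ⟨t, ht⟩ := hdvd
  obtain ⟨k, hk⟩ := hodd
  rw [h2] at ht
  omega

end Component2


/-- Purity criterion: over a CG-ring `R = ∏ S i` of odd characteristic (each `S i` a
Galois ring for the prime `p i`), a subgroup `K ≤ R^×` is pure iff for each `i` with
`S i` not a field, the rank of `K ∩ U_{p i}` is less than `r_{p i}`, the residue
degree; equivalently, `K ∩ U_{p i}` contains no copy of `(ℤ/p i)^{r_{p i}}`. -/
theorem pure_iff_rank_lt {n : ℕ} (S : Fin n → Type) [instR : ∀ i, CommRing (S i)]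
    [∀ i, Fintype (S i)] [∀ i, IsLocalRing (S i)]
    (p : Fin n → ℕ) (hp : ∀ i, (p i).Prime)
    (hGal : ∀ i, IsLocalRing.maximalIdeal (S i) = Ideal.span {((p i : S i))})
    (hco : ∀ i j : Fin n, i ≠ j → p i ≠ p j)
    (hodd : ∀ i, Odd (ringChar (S i)))
    (K : Subgroup (∀ i, S i)ˣ) :
    IsPureSet (((↑) : (∀ i, S i)ˣ → (∀ i, S i)) '' (K : Set (∀ i, S i)ˣ)) ↔
    ∀ i, ¬ IsField (S i) →
      ¬ ∃ φ : Multiplicative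
            (Fin (Nat.log (p i) (Nat.card (IsLocalRing.ResidueField (S i)))) → ZMod (p i)) →*
            (∀ j, S j)ˣ,
          Function.Injective φ ∧
          ∀ x, φ x ∈ K ∧ (∀ j, j ≠ i → ((φ x : (∀ j, S j)ˣ) : ∀ j, S j) j = 1) ∧
            (((φ x : (∀ j, S j)ˣ) : ∀ j, S j) i - 1 ∈ IsLocalRing.maximalIdeal (S i)) := by
  classical
  constructor
  · rintro hpure i hnf ⟨φ, hinj, hprop⟩
    haveI : NeZero (p i) := ⟨(hp i).ne_zero⟩
    obtain ⟨e, he0, hnfe, hmin, htor, G, hGinj, hGmem, hGsurj⟩ :=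
      comp_main (hp i) (comp_p_ne_two (hp i) (hGal i) (hodd i)) (hGal i)
    set I : Ideal (∀ j, S j) := Ideal.span {Pi.single i e} with hI
    -- structure of elements of I
    have hImem : ∀ a ∈ I, (∀ j, j ≠ i → a j = 0) ∧ a i ∈ Ideal.span {e} := by
      intro a ha
      obtain ⟨t, ht⟩ := Ideal.mem_span_singleton.1 ha
      constructor
      · intro j hj
        have := congrFun ht j
        simp only [Pi.mul_apply] at this
        rw [this, Pi.single_eq_of_ne hj, zero_mul]
      · have := congrFun ht i
        simp only [Pi.mul_apply] at this
        rw [this, Pi.single_eq_same]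
        exact Ideal.mem_span_singleton.2 (Dvd.intro _ rfl)
    -- the key surjectivity claim
    have hkey : ∀ c ∈ Ideal.span {e}, ∃ v, ((φ (Multiplicative.ofAdd v) : (∀ j, S j)ˣ) : (∀ j, S j))
        = 1 + Pi.single i c := by
      set f : (Fin (Nat.log (p i) (Nat.card (IsLocalRing.ResidueField (S i)))) → ZMod (p i)) → S i :=
        fun v => ((φ (Multiplicative.ofAdd v) : (∀ j, S j)ˣ) : (∀ j, S j)) i - 1 with hf
      have hfpow : ∀ v, (1 + f v)^(p i) = 1 := by
        intro v
        have hx1 : (Multiplicative.ofAdd v)^(p i) = 1 := by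
          have : (p i) • v = 0 := by
            funext j
            rw [Pi.smul_apply, nsmul_eq_mul, ZMod.natCast_self, zero_mul, Pi.zero_apply]
          rw [← ofAdd_nsmul, this, ofAdd_zero]
        have : (φ (Multiplicative.ofAdd v))^(p i) = 1 := by rw [← map_pow, hx1, map_one]
        have hval : (((φ (Multiplicative.ofAdd v) : (∀ j, S j)ˣ) : (∀ j, S j)))^(p i) = 1 := by
          rw [← Units.val_pow_eq_pow_val, this, Units.val_one]
        have := congrFun hval i
        rw [Pi.pow_apply, Pi.one_apply] at this
        rw [hf]
        simpa using this
      have hfmem : ∀ v, f v ∈ Ideal.span {e} := by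
        intro v
        exact htor _ ((hprop (Multiplicative.ofAdd v)).2.2) (hfpow v)
      have hfinj : Function.Injective f := by
        intro v w hvw
        have hval : ((φ (Multiplicative.ofAdd v) : (∀ j, S j)ˣ) : (∀ j, S j))
            = ((φ (Multiplicative.ofAdd w) : (∀ j, S j)ˣ) : (∀ j, S j)) := by
          funext j
          rcases eq_or_ne j i with rfl | hj
          · exact sub_left_inj.1 hvw
          · rw [(hprop _).2.1 j hj, (hprop _).2.1 j hj]
        have := hinj (Units.ext hval)
        exact Multiplicative.ofAdd.injective this
      -- counting
      intro c hc
      set T := {y : S i // y ∈ Ideal.span {e}} with hT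
      have hG' : Function.Bijective (fun v => (⟨G v, hGmem v⟩ : T)) := by
        constructor
        · intro a b hab
          exact hGinj (congrArg Subtype.val hab)
        · rintro ⟨y, hy⟩
          obtain ⟨v, hv⟩ := hGsurj y hy
          exact ⟨v, Subtype.ext hv⟩
      have hf' : Function.Surjective (fun v => (⟨f v, hfmem v⟩ : T)) := by
        rw [← Finite.injective_iff_surjective_of_equiv (Equiv.ofBijective _ hG')]
        intro a b hab
        exact hfinj (congrArg Subtype.val hab)
      obtain ⟨v, hv⟩ := hf' ⟨c, hc⟩
      refine ⟨v, ?_⟩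
      have hvc : f v = c := congrArg Subtype.val hv
      funext j
      rcases eq_or_ne j i with rfl | hj
      · rw [Pi.add_apply, Pi.one_apply, Pi.single_eq_same, ← hvc, hf]
        ring
      · rw [Pi.add_apply, Pi.one_apply, Pi.single_eq_of_ne hj, add_zero]
        exact (hprop _).2.1 j hj
    -- purity applied to I
    have hXI : (Units.val '' (K : Set (∀ j, S j)ˣ)) + (I : Set (∀ j, S j)) = (Units.val '' (K : Set (∀ j, S j)ˣ)) := by
      apply Set.Subset.antisymm
      · rintro z hz
        rw [Set.mem_add] at hz
        obtain ⟨x, hx, a, ha, rfl⟩ := hz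
        obtain ⟨u, huK, rfl⟩ := hx
        set b : (∀ j, S j) := ((u⁻¹ : (∀ j, S j)ˣ) : (∀ j, S j)) * a with hb
        have hbI : b ∈ I := Ideal.mul_mem_left _ _ ha
        obtain ⟨hbz, hbi⟩ := hImem b hbI
        obtain ⟨v, hv⟩ := hkey (b i) hbi
        refine ⟨u * φ (Multiplicative.ofAdd v), K.mul_mem huK (hprop _).1, ?_⟩
        rw [Units.val_mul, hv, mul_add, mul_one]
        congr 1
        funext j
        rcases eq_or_ne j i with rfl | hj
        · rw [Pi.mul_apply, Pi.single_eq_same, hb, Pi.mul_apply]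
          have h1 : ((u : (∀ j, S j)) j) * (((u⁻¹ : (∀ j, S j)ˣ) : (∀ j, S j)) j) = 1 := by
            have := congrFun (Units.mul_inv u ▸ rfl : ((u : (∀ j, S j)) * ((u⁻¹ : (∀ j, S j)ˣ) : (∀ j, S j))) = 1) j
            simpa using this
          calc (u : (∀ j, S j)) j * (((u⁻¹:(∀ j, S j)ˣ):(∀ j, S j)) j * a j) = ((u : (∀ j, S j)) j * ((u⁻¹:(∀ j, S j)ˣ):(∀ j, S j)) j) * a j := by ring
            _ = a j := by rw [h1, one_mul]
        · rw [Pi.mul_apply, Pi.single_eq_of_ne hj, mul_zero]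
          have haz : a j = 0 := by
            have := (hImem a ha).1 j hj
            exact this
          rw [haz]
      · intro z hz
        rw [Set.mem_add]
        exact ⟨z, hz, 0, I.zero_mem, add_zero z⟩
    have := hpure I hXI
    rw [hI, Ideal.span_singleton_eq_bot] at this
    have := congrFun this i
    rw [Pi.single_eq_same] at this
    exact he0 this
  · intro hrhs I hXI
    by_contra hIbot
    obtain ⟨x, hxI, hx0⟩ := Submodule.exists_mem_ne_zero_of_ne_bot hIbot
    have hxi : ∃ i, x i ≠ 0 := Function.ne_iff.1 hx0
    obtain ⟨i, hxi⟩ := hxi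
    haveI : NeZero (p i) := ⟨(hp i).ne_zero⟩
    by_cases hf : IsField (S i)
    · obtain ⟨v, hv⟩ := hf.mul_inv_cancel hxi
      have haI : Pi.single i (-(1 : S i)) ∈ I := by
        have heq : Pi.single i (-(1 : S i)) = Pi.single i (-v) * x := by
          funext j
          rcases eq_or_ne j i with rfl | hj
          · rw [Pi.mul_apply, Pi.single_eq_same, Pi.single_eq_same]
            rw [neg_mul]
            rw [mul_comm, hv]
          · rw [Pi.mul_apply, Pi.single_eq_of_ne hj, Pi.single_eq_of_ne hj, zero_mul]
        rw [heq]
        exact Ideal.mul_mem_left _ _ hxI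
      have h1X : (1 : (∀ j, S j)) + Pi.single i (-(1:S i)) ∈ (Units.val '' (K : Set (∀ j, S j)ˣ)) := by
        rw [← hXI, Set.mem_add]
        exact ⟨1, ⟨1, K.one_mem, Units.val_one⟩, _, haI, rfl⟩
      obtain ⟨u, huK, huv⟩ := h1X
      have hui : (u : (∀ j, S j)) i = 0 := by
        have := congrFun huv i
        rw [Pi.add_apply, Pi.one_apply, Pi.single_eq_same] at this
        rw [this]; ring
      have h1 : ((u : (∀ j, S j)) * ((u⁻¹ : (∀ j, S j)ˣ) : (∀ j, S j))) i = 1 := by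
        rw [Units.mul_inv u]; rfl
      rw [Pi.mul_apply, hui, zero_mul] at h1
      exact zero_ne_one h1
    · apply hrhs i hf
      obtain ⟨e, he0, hnfe, hmin, htor, G, hGinj, hGmem, hGsurj⟩ :=
        comp_main (hp i) (comp_p_ne_two (hp i) (hGal i) (hodd i)) (hGal i)
      obtain ⟨hem, hee⟩ := hnfe hf
      have hspanle : Ideal.span {e} ≤ IsLocalRing.maximalIdeal (S i) := by
        rw [Ideal.span_le]
        intro y hy
        simp only [Set.mem_singleton_iff] at hy
        subst hy
        exact hem
      have hsq : ∀ a b : S i, a ∈ Ideal.span {e} → b ∈ Ideal.span {e} → a * b = 0 := by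
        intro a b ha hb
        obtain ⟨a', ha'⟩ := Ideal.mem_span_singleton.1 ha
        obtain ⟨b', hb'⟩ := Ideal.mem_span_singleton.1 hb
        rw [ha', hb']
        calc e * a' * (e * b') = (e * e) * (a' * b') := by ring
          _ = 0 := by rw [hee, zero_mul]
      have hsingle : ∀ c ∈ Ideal.span {e}, Pi.single i c ∈ I := by
        intro c hc
        obtain ⟨z, hz⟩ := Ideal.mem_span_singleton.1 hc
        obtain ⟨s, hs⟩ := Ideal.mem_span_singleton.1 (hmin (x i) hxi)
        have heq : Pi.single i c = Pi.single i (s * z) * x := by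
          funext j
          rcases eq_or_ne j i with rfl | hj
          · rw [Pi.mul_apply, Pi.single_eq_same, Pi.single_eq_same, hz, hs]
            ring
          · rw [Pi.mul_apply, Pi.single_eq_of_ne hj, Pi.single_eq_of_ne hj, zero_mul]
        rw [heq]
        exact Ideal.mul_mem_left _ _ hxI
      have hmemX : ∀ c ∈ Ideal.span {e}, ∃ u : (∀ j, S j)ˣ, u ∈ K ∧ (u : (∀ j, S j)) = 1 + Pi.single i c := by
        intro c hc
        have : (1 : (∀ j, S j)) + Pi.single i c ∈ (Units.val '' (K : Set (∀ j, S j)ˣ)) := by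
          rw [← hXI, Set.mem_add]
          exact ⟨1, ⟨1, K.one_mem, Units.val_one⟩, _, hsingle c hc, rfl⟩
        obtain ⟨u, huK, huv⟩ := this
        exact ⟨u, huK, huv⟩
      -- zero-square elements of (∀ j, S j) supported at i
      have hsq' : ∀ a b : S i, a ∈ Ideal.span {e} → b ∈ Ideal.span {e} →
          (Pi.single i a : (∀ j, S j)) * Pi.single i b = 0 := by
        intro a b ha hb
        funext j
        rcases eq_or_ne j i with rfl | hj
        · rw [Pi.mul_apply, Pi.single_eq_same, Pi.single_eq_same, hsq a b ha hb]; rfl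
        · rw [Pi.mul_apply, Pi.single_eq_of_ne hj, zero_mul]; rfl
      set ψ : (Fin (Nat.log (p i) (Nat.card (IsLocalRing.ResidueField (S i)))) → ZMod (p i)) → (∀ j, S j)ˣ :=
        fun v => ⟨1 + Pi.single i (G v), 1 - Pi.single i (G v),
          by
            have := hsq' (G v) (G v) (hGmem v) (hGmem v)
            linear_combination -this,
          by
            have := hsq' (G v) (G v) (hGmem v) (hGmem v)
            linear_combination -this⟩ with hψ
      have hψval : ∀ v, ((ψ v : (∀ j, S j)ˣ) : (∀ j, S j)) = 1 + Pi.single i (G v) := fun v => rfl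
      set φ : Multiplicative
          (Fin (Nat.log (p i) (Nat.card (IsLocalRing.ResidueField (S i)))) → ZMod (p i)) →* (∀ j, S j)ˣ :=
        MonoidHom.mk' (fun x => ψ (Multiplicative.toAdd x)) (by
          intro a b
          apply Units.ext
          show ((ψ (Multiplicative.toAdd (a * b)) : (∀ j, S j)ˣ) : (∀ j, S j))
            = ((ψ (Multiplicative.toAdd a) * ψ (Multiplicative.toAdd b) : (∀ j, S j)ˣ) : (∀ j, S j))
          rw [Units.val_mul, hψval, hψval, hψval]
          have hAB := hsq' (G (Multiplicative.toAdd a)) (G (Multiplicative.toAdd b))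
            (hGmem _) (hGmem _)
          have htoadd : Multiplicative.toAdd (a * b)
              = Multiplicative.toAdd a + Multiplicative.toAdd b := rfl
          rw [htoadd, map_add, Pi.single_add]
          linear_combination -hAB) with hφ
      refine ⟨φ, ?_, ?_⟩
      · intro a b hab
        have hval : ((φ a : (∀ j, S j)ˣ) : (∀ j, S j)) = ((φ b : (∀ j, S j)ˣ) : (∀ j, S j)) := by rw [hab]
        rw [hφ] at hval
        simp only [MonoidHom.mk'_apply] at hval
        have := congrFun (add_left_cancel hval) i
        rw [Pi.single_eq_same, Pi.single_eq_same] at this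
        have := hGinj this
        have h2 : Multiplicative.toAdd a = Multiplicative.toAdd b := this
        exact Multiplicative.toAdd.injective h2
      · intro x'
        have hval : ((φ x' : (∀ j, S j)ˣ) : (∀ j, S j)) = 1 + Pi.single i (G (Multiplicative.toAdd x')) :=
          hψval _
        refine ⟨?_, ?_, ?_⟩
        · obtain ⟨u, huK, huv⟩ := hmemX _ (hGmem (Multiplicative.toAdd x'))
          have : u = φ x' := Units.ext (huv.trans hval.symm)
          rwa [this] at huK
        · intro j hj
          rw [hval, Pi.add_apply, Pi.one_apply, Pi.single_eq_of_ne hj, add_zero]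
        · rw [hval, Pi.add_apply, Pi.one_apply, Pi.single_eq_same]
          have : 1 + G (Multiplicative.toAdd x') - 1 = G (Multiplicative.toAdd x') := by ring
          rw [this]
          exact hspanle (hGmem _)
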